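/- If U is a versor (product of invertible vectors) in a Clifford algebra over a quadratic form, and W is a product of vectors satisfying U W U⁻¹ = γ W for a scalar γ, then either the 'norm' W * reverse(W) is zero, or γ² = 1. -/
import Mathlib

open CliffordAlgebra

lemma prod_mul_reverse_prod {M : Type*} [AddCommGroup M] [Module ℝ M]
    (Q : QuadraticForm ℝ M) :
    ∀ l : List M, (l.map (ι Q)).prod * reverse (Q := Q) (l.map (ι Q)).prod
      = algebraMap ℝ _ (l.map Q).prod
  | [] => by simp
  | x :: xs => by
      have ih := prod_mul_reverse_prod Q xs
      simp only [List.map_cons, List.prod_cons, reverse.map_mul, reverse_ι]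
      calc ι Q x * (xs.map (ι Q)).prod * (reverse (Q := Q) (xs.map (ι Q)).prod * ι Q x)
          = ι Q x * ((xs.map (ι Q)).prod * reverse (Q := Q) (xs.map (ι Q)).prod) * ι Q x := by
            noncomm_ring
        _ = algebraMap ℝ _ (Q x * (xs.map Q).prod) := by
            rw [ih, mul_assoc, Algebra.commutes, ← mul_assoc, ι_sq_scalar, ← map_mul]

/-- If `U` is a versor (product of invertible vectors) in a real Clifford algebra and
`W` is a product of vectors with `U W U⁻¹ = γ W`, then `W * reverse W = 0` or `γ² = 1`. -/
theorem versor_conjugation_eigenvalue {M : Type*} [AddCommGroup M] [Module ℝ M]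
    (Q : QuadraticForm ℝ M) (l m : List M) (U W Uinv : CliffordAlgebra Q) (γ : ℝ)
    (hU : U = (l.map (ι Q)).prod)
    (hUvec : ∀ x ∈ l, IsUnit (ι Q x))
    (hW : W = (m.map (ι Q)).prod)
    (hUinv : U * Uinv = 1) (hUinv' : Uinv * U = 1)
    (hconj : U * W * Uinv = γ • W) :
    W * reverse (Q := Q) W = 0 ∨ γ ^ 2 = 1 := by
  set c : ℝ := (m.map Q).prod with hc
  set d : ℝ := (l.map Q).prod with hd
  have hWW : W * reverse (Q := Q) W = algebraMap ℝ _ c := by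
    rw [hW]; exact prod_mul_reverse_prod Q m
  have hUU : U * reverse (Q := Q) U = algebraMap ℝ _ d := by
    rw [hU]; exact prod_mul_reverse_prod Q l
  have hrevU : reverse (Q := Q) U = (l.reverse.map (ι Q)).prod := by
    rw [hU, reverse_prod_map_ι, List.map_reverse]
  have hrUU : reverse (Q := Q) U * U = algebraMap ℝ _ d := by
    have h := prod_mul_reverse_prod Q l.reverse
    rw [← hrevU, reverse_reverse] at h
    rw [h, List.map_reverse, List.prod_reverse]
  -- d ≠ 0
  have hd0 : d ≠ 0 := by
    intro h0
    have hr0 : reverse (Q := Q) U = 0 := by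
      have h2 : Uinv * (U * reverse (Q := Q) U) = 0 := by
        rw [hUU, h0, map_zero, mul_zero]
      rwa [← mul_assoc, hUinv', one_mul] at h2
    have hU0 : U = 0 := by
      have h3 := congrArg (reverse (Q := Q)) hr0
      rwa [reverse_reverse, map_zero] at h3
    rw [hU0, zero_mul] at hUinv
    exact one_ne_zero hUinv.symm
  -- reverse U = d • Uinv
  have hrU_eq : reverse (Q := Q) U = d • Uinv := by
    calc reverse (Q := Q) U = (Uinv * U) * reverse (Q := Q) U := by rw [hUinv', one_mul]
      _ = Uinv * (U * reverse (Q := Q) U) := by rw [mul_assoc]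
      _ = Uinv * algebraMap ℝ _ d := by rw [hUU]
      _ = d • Uinv := by
          rw [Algebra.algebraMap_eq_smul_one, mul_smul_comm, mul_one]
  have hUinv_eq : Uinv = d⁻¹ • reverse (Q := Q) U := by
    rw [hrU_eq, smul_smul, inv_mul_cancel₀ hd0, one_smul]
  have hrUinv : reverse (Q := Q) Uinv = d⁻¹ • U := by
    rw [hUinv_eq, map_smul, reverse_reverse]
  -- reverse of hconj
  have hrconj : reverse (Q := Q) Uinv * reverse (Q := Q) W * reverse (Q := Q) U
      = γ • reverse (Q := Q) W := by
    have h := congrArg (reverse (Q := Q)) hconj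
    rw [reverse.map_mul, reverse.map_mul, map_smul] at h
    rw [← mul_assoc] at h
    exact h
  -- multiply hconj with hrconj
  have key : algebraMap ℝ (CliffordAlgebra Q) c = (γ * γ) • algebraMap ℝ _ c := by
    have h1 : (U * W * Uinv) * (reverse (Q := Q) Uinv * reverse (Q := Q) W * reverse (Q := Q) U)
        = (γ • W) * (γ • reverse (Q := Q) W) := by rw [hconj, hrconj]
    have hrhs : (γ • W) * (γ • reverse (Q := Q) W) = (γ * γ) • algebraMap ℝ _ c := by
      rw [smul_mul_smul_comm, hWW]
    have hlhs : (U * W * Uinv) * (reverse (Q := Q) Uinv * reverse (Q := Q) W * reverse (Q := Q) U)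
        = algebraMap ℝ _ c := by
      rw [hrUinv]
      calc (U * W * Uinv) * ((d⁻¹ • U) * reverse (Q := Q) W * reverse (Q := Q) U)
          = d⁻¹ • (U * W * (Uinv * U) * reverse (Q := Q) W * reverse (Q := Q) U) := by
            rw [smul_mul_assoc, smul_mul_assoc, mul_smul_comm]
            congr 1
            noncomm_ring
        _ = d⁻¹ • (U * (W * reverse (Q := Q) W) * reverse (Q := Q) U) := by
            rw [hUinv', mul_one, mul_assoc U W]
        _ = d⁻¹ • (algebraMap ℝ _ c * (U * reverse (Q := Q) U)) := by
            rw [hWW]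
            congr 1
            rw [← Algebra.commutes, mul_assoc]
        _ = d⁻¹ • (algebraMap ℝ _ c * algebraMap ℝ _ d) := by rw [hUU]
        _ = algebraMap ℝ _ c := by
            rw [← map_mul, Algebra.algebraMap_eq_smul_one, smul_smul,
              mul_comm c d, ← mul_assoc, inv_mul_cancel₀ hd0, one_mul,
              ← Algebra.algebraMap_eq_smul_one]
    exact hlhs.symm.trans (h1.trans hrhs)
  -- conclude
  have hscal : c = γ * γ * c := by
    have : algebraMap ℝ (CliffordAlgebra Q) c = algebraMap ℝ _ (γ * γ * c) := by
      rw [key, Algebra.algebraMap_eq_smul_one, Algebra.algebraMap_eq_smul_one, smul_smul]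
    exact (algebraMap ℝ (CliffordAlgebra Q)).injective this
  by_cases hc0 : c = 0
  · left; rw [hWW, hc0, map_zero]
  · right
    have h : γ * γ = 1 := by
      have := hscal
      field_simp at this
      nlinarith [this]
    rw [pow_two]; exact h
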